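/- For every k ≥ 0, the graph B^θ_k obtained from θ(2,2,1) by attaching k pendant edges at one vertex of degree three satisfies λ₂(B^θ_k) < -1/2. Moreover -(n+1)/(2n) < λ₂(B^θ_k) where n = k + 4 is the number of vertices; hence λ₂(B^θ_k) → -1/2 as k → ∞. -/

import Mathlib

open Real

/-- The `k`-th largest eigenvalue (1-indexed, with multiplicity) of a real
symmetric matrix; junk value `0` if the matrix is not Hermitian. -/
noncomputable def kthLargestEig {V : Type*} [Fintype V] [DecidableEq V]
    (k : ℕ) (A : Matrix V V ℝ) : ℝ :=
  if h : A.IsHermitian then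
    ((Finset.univ.val.map h.eigenvalues).sort (· ≤ ·)).getD (Fintype.card V - k) 0
  else 0

/-- The second largest eigenvalue of a real symmetric matrix. -/
noncomputable def lambda2 {V : Type*} [Fintype V] [DecidableEq V]
    (A : Matrix V V ℝ) : ℝ := kthLargestEig 2 A

/-- The distance matrix of a graph (entries are graph distances, as reals). -/
noncomputable def distMatrix {V : Type*} [Fintype V] (G : SimpleGraph V) :
    Matrix V V ℝ := fun u v => (G.dist u v : ℝ)

/-- A graph is chordal if every cycle of length at least 4 has a chord, i.e. an
edge of the graph joining two vertices of the cycle that is not a cycle edge. -/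
def SimpleGraph.Chordal {V : Type*} (G : SimpleGraph V) : Prop :=
  ∀ (u : V) (w : G.Walk u u), w.IsCycle → 4 ≤ w.length →
    ∃ x y, x ∈ w.support ∧ y ∈ w.support ∧ G.Adj x y ∧ s(x, y) ∉ w.edges

/-- `B^θ_k`: the graph obtained from `K₄` minus the edge `{2,3}` (vertices
`0 = w`, `1 = z` of degree 3, `2, 3` of degree 2) by attaching `k` pendant
vertices (vertices `4, …, k+3`) at `w = 0`. -/
def Btheta (k : ℕ) : SimpleGraph (Fin (k + 4)) where
  Adj x y := x ≠ y ∧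
    (((x : ℕ) < 4 ∧ (y : ℕ) < 4 ∧
        ¬(((x : ℕ) = 2 ∧ (y : ℕ) = 3) ∨ ((x : ℕ) = 3 ∧ (y : ℕ) = 2))) ∨
      ((x : ℕ) = 0 ∧ 4 ≤ (y : ℕ)) ∨ ((y : ℕ) = 0 ∧ 4 ≤ (x : ℕ)))
  symm := by
    constructor
    intro x y h
    exact ⟨h.1.symm, by tauto⟩
  loopless := by
    constructor
    intro x h
    exact h.1 rfl

namespace BT

lemma adj0 {k : ℕ} {v : Fin (k+4)} (hv : (v:ℕ) ≠ 0) : (Btheta k).Adj 0 v := by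
  refine ⟨?_, ?_⟩
  · intro h; apply hv; rw [← h]; simp
  · have h0 : ((0 : Fin (k+4)) : ℕ) = 0 := by simp
    rw [h0]; omega

lemma dist_adj {k : ℕ} {u v : Fin (k+4)} (h : (Btheta k).Adj u v) :
    (Btheta k).dist u v = 1 := SimpleGraph.dist_eq_one_iff_adj.mpr h

lemma dist_two {k : ℕ} {u v : Fin (k+4)} (huv : u ≠ v)
    (hna : ¬ (Btheta k).Adj u v) (h0u : (u:ℕ) ≠ 0) (h0v : (v:ℕ) ≠ 0) :
    (Btheta k).dist u v = 2 := by
  have hu0 : (Btheta k).Adj u 0 := ((adj0 h0u).symm)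
  have h0v' : (Btheta k).Adj 0 v := adj0 h0v
  have hle : (Btheta k).dist u v ≤ 2 := by
    simpa using SimpleGraph.dist_le
      (SimpleGraph.Walk.cons hu0 (SimpleGraph.Walk.cons h0v' SimpleGraph.Walk.nil))
  have hr : (Btheta k).Reachable u v :=
    ⟨SimpleGraph.Walk.cons hu0 (SimpleGraph.Walk.cons h0v' SimpleGraph.Walk.nil)⟩
  have hpos : 0 < (Btheta k).dist u v := hr.pos_dist_of_ne huv
  have h1 : (Btheta k).dist u v ≠ 1 := by
    intro h; exact hna (SimpleGraph.dist_eq_one_iff_adj.mp h)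
  omega

end BT

namespace BT

def sig (k : ℕ) (u : Fin (k+4)) : Fin 4 :=
  if (u:ℕ) = 0 then 0 else if (u:ℕ) = 1 then 1 else if (u:ℕ) < 4 then 2 else 3

noncomputable def fmat : Matrix (Fin 4) (Fin 4) ℝ :=
  !![2,1,1,1; 1,2,1,2; 1,1,2,2; 1,2,2,2]

lemma sig0 {k : ℕ} {u : Fin (k+4)} (h : (u:ℕ) = 0) : sig k u = 0 := by simp [sig, h]
lemma sig1 {k : ℕ} {u : Fin (k+4)} (h : (u:ℕ) = 1) : sig k u = 1 := by simp [sig, h]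
lemma sig2 {k : ℕ} {u : Fin (k+4)} (h : (u:ℕ) = 2 ∨ (u:ℕ) = 3) : sig k u = 2 := by
  rcases h with h|h <;> simp [sig, h]
lemma sig3 {k : ℕ} {u : Fin (k+4)} (h : 4 ≤ (u:ℕ)) : sig k u = 3 := by
  have h0 : ¬ ((u:ℕ) = 0) := by omega
  have h1 : ¬ ((u:ℕ) = 1) := by omega
  have h2 : ¬ ((u:ℕ) < 4) := by omega
  simp [sig, h0, h1, h2]

lemma distM_entry (k : ℕ) (u v : Fin (k+4)) :
    distMatrix (Btheta k) u v = fmat (sig k u) (sig k v) - (if u = v then 2 else 0) := by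
  rcases eq_or_ne u v with rfl | huv
  · have h2 : ∀ i : Fin 4, fmat i i = 2 := by intro i; fin_cases i <;> norm_num [fmat]
    simp [distMatrix, h2]
  · have hvne : (u:ℕ) ≠ (v:ℕ) := fun h => huv (Fin.val_injective h)
    rw [if_neg huv]
    show ((Btheta k).dist u v : ℝ) = _
    rcases (by omega : (u:ℕ) = 0 ∨ (u:ℕ) = 1 ∨ (u:ℕ) = 2 ∨ (u:ℕ) = 3 ∨ 4 ≤ (u:ℕ)) with hu|hu|hu|hu|hu <;>
      rcases (by omega : (v:ℕ) = 0 ∨ (v:ℕ) = 1 ∨ (v:ℕ) = 2 ∨ (v:ℕ) = 3 ∨ 4 ≤ (v:ℕ)) with hv|hv|hv|hv|hv <;>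
      (first
        | rw [BT.dist_adj (show (Btheta k).Adj u v from ⟨huv, by omega⟩)]
        | rw [BT.dist_two huv (fun h => by have := h.2; omega) (by omega) (by omega)]) <;>
      (first | rw [sig0 hu] | rw [sig1 hu] | rw [sig2 (Or.inl hu)] | rw [sig2 (Or.inr hu)] | rw [sig3 hu]) <;>
      (first | rw [sig0 hv] | rw [sig1 hv] | rw [sig2 (Or.inl hv)] | rw [sig2 (Or.inr hv)] | rw [sig3 hv]) <;>
      (first | omega | norm_num [fmat, Matrix.vecHead, Matrix.vecTail, Matrix.cons_val_two, Matrix.cons_val_three])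

end BT

namespace BT
open Matrix

noncomputable def S (k : ℕ) : Matrix (Fin (k+4)) (Fin 4) ℝ :=
  fun u i => if sig k u = i then 1 else 0

lemma sum_sig (k : ℕ) (g : Fin 4 → ℝ) :
    ∑ u : Fin (k+4), g (sig k u) = g 0 + g 1 + 2 * g 2 + k * g 3 := by
  induction k with
  | zero =>
    rw [Fin.sum_univ_four]
    have e0 : sig 0 (0 : Fin 4) = 0 := sig0 (by decide)
    have e1 : sig 0 (1 : Fin 4) = 1 := sig1 (by decide)
    have e2 : sig 0 (2 : Fin 4) = 2 := sig2 (Or.inl (by decide))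
    have e3 : sig 0 (3 : Fin 4) = 2 := sig2 (Or.inr (by decide))
    rw [e0, e1, e2, e3]; push_cast; ring
  | succ k ih =>
    have : ∑ u : Fin (k+1+4), g (sig (k+1) u)
        = (∑ u : Fin (k+4), g (sig (k+1) u.castSucc)) + g (sig (k+1) (Fin.last (k+4))) :=
      Fin.sum_univ_castSucc _
    rw [this]
    have hcast : ∀ u : Fin (k+4), sig (k+1) u.castSucc = sig k u := by
      intro u; simp [sig, Fin.coe_castSucc]
    have hlast : sig (k+1) (Fin.last (k+4)) = 3 := sig3 (by simp [Fin.last])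
    simp only [hcast, hlast, ih]
    push_cast; ring

lemma SfS_entry (k : ℕ) (u v : Fin (k+4)) :
    (S k * fmat * (S k)ᵀ) u v = fmat (sig k u) (sig k v) := by
  rw [Matrix.mul_apply]
  have inner : ∀ j, (S k * fmat) u j = fmat (sig k u) j := by
    intro j
    rw [Matrix.mul_apply]
    simp [S, ite_mul, Finset.sum_ite_eq]
  simp only [inner, Matrix.transpose_apply]
  simp [S, mul_ite, Finset.sum_ite_eq]

lemma distM_eq (k : ℕ) :
    distMatrix (Btheta k) = S k * fmat * (S k)ᵀ - (2:ℝ) • (1 : Matrix (Fin (k+4)) (Fin (k+4)) ℝ) := by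
  ext u v
  rw [Matrix.sub_apply, SfS_entry, distM_entry]
  rcases eq_or_ne u v with rfl | huv
  · simp [Matrix.one_apply]
  · simp [Matrix.one_apply, huv]

lemma StS (k : ℕ) :
    (S k)ᵀ * S k = !![1,0,0,0; 0,1,0,0; 0,0,2,0; 0,0,0,(k:ℝ)] := by
  ext i j
  rw [Matrix.mul_apply]
  simp only [Matrix.transpose_apply]
  have h := sum_sig k (fun m => (if m = i then (1:ℝ) else 0) * (if m = j then 1 else 0))
  beta_reduce at h
  calc ∑ u : Fin (k+4), S k u i * S k u j
      = ∑ u : Fin (k+4), (if sig k u = i then (1:ℝ) else 0) * (if sig k u = j then 1 else 0) := by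
        simp [S]
    _ = _ := by rw [h]; fin_cases i <;> fin_cases j <;> norm_num [Fin.ext_iff, show ((3:Fin 4):ℕ) = 3 from rfl, show ((2:Fin 4):ℕ) = 2 from rfl, show ((1:Fin 4):ℕ) = 1 from rfl, show ((0:Fin 4):ℕ) = 0 from rfl]

end BT

namespace BT
open Matrix

lemma herm (k : ℕ) : (distMatrix (Btheta k)).IsHermitian := by
  show (distMatrix (Btheta k))ᴴ = distMatrix (Btheta k)
  ext u v
  simp only [Matrix.conjTranspose_apply, distMatrix, star_trivial]
  rw [SimpleGraph.dist_comm]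

lemma eig_prod (k : ℕ) (x : ℝ) :
    ∏ i, (x - (herm k).eigenvalues i)
      = (x • (1 : Matrix (Fin (k+4)) (Fin (k+4)) ℝ) - distMatrix (Btheta k)).det := by
  have hA := (herm k).spectral_theorem
  rw [Unitary.conjStarAlgAut_apply] at hA
  set U : Matrix (Fin (k+4)) (Fin (k+4)) ℝ :=
    (Matrix.IsHermitian.eigenvectorUnitary (herm k) : Matrix (Fin (k+4)) (Fin (k+4)) ℝ) with hU
  have hUU : U * star U = 1 :=
    Matrix.mem_unitaryGroup_iff.mp (Matrix.IsHermitian.eigenvectorUnitary (herm k)).2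
  have key : x • (1 : Matrix (Fin (k+4)) (Fin (k+4)) ℝ) - distMatrix (Btheta k)
      = U * (x • (1 : Matrix (Fin (k+4)) (Fin (k+4)) ℝ)
          - diagonal (RCLike.ofReal ∘ (herm k).eigenvalues)) * star U := by
    rw [Matrix.mul_sub, Matrix.sub_mul, ← hA]
    congr 1
    rw [Matrix.mul_smul, Matrix.mul_one, Matrix.smul_mul, hUU]
  rw [key, Matrix.det_mul, Matrix.det_mul]
  have hdetU : (U.det) * ((star U).det) = 1 := by
    rw [← Matrix.det_mul, hUU, Matrix.det_one]
  have : U.det * (x • (1 : Matrix (Fin (k+4)) (Fin (k+4)) ℝ)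
      - diagonal (RCLike.ofReal ∘ (herm k).eigenvalues)).det * (star U).det
      = (x • (1 : Matrix (Fin (k+4)) (Fin (k+4)) ℝ)
      - diagonal (RCLike.ofReal ∘ (herm k).eigenvalues)).det * (U.det * (star U).det) := by
    ring
  rw [this, hdetU, mul_one]
  rw [Matrix.smul_one_eq_diagonal, Matrix.diagonal_sub, Matrix.det_diagonal]
  simp [RCLike.ofReal_real_eq_id]

lemma det_eval (k : ℕ) (x : ℝ) (hx : x ≠ -2) :
    (x • (1 : Matrix (Fin (k+4)) (Fin (k+4)) ℝ) - distMatrix (Btheta k)).det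
      = (x+2)^k * (x^4 - 2*k*x^3 - (9*k+9)*x^2 - (8*k+12)*x - (2*k+4)) := by
  have hy : x + 2 ≠ 0 := fun h => hx (by linarith)
  rw [distM_eq]
  have h1 : x • (1 : Matrix (Fin (k+4)) (Fin (k+4)) ℝ)
        - (S k * fmat * (S k)ᵀ - (2:ℝ) • (1 : Matrix (Fin (k+4)) (Fin (k+4)) ℝ))
      = (x+2) • ((1 : Matrix (Fin (k+4)) (Fin (k+4)) ℝ)
        - ((x+2)⁻¹ • (S k * fmat)) * (S k)ᵀ) := by
    have h0 : (x+2) • (((x+2)⁻¹ • (S k * fmat)) * (S k)ᵀ) = S k * fmat * (S k)ᵀ := by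
      rw [Matrix.smul_mul, smul_smul, mul_inv_cancel₀ hy, one_smul]
    rw [smul_sub, h0, add_smul]
    abel
  rw [h1, Matrix.det_smul, Matrix.det_one_sub_mul_comm]
  have h2 : (S k)ᵀ * ((x+2)⁻¹ • (S k * fmat))
      = (x+2)⁻¹ • ((((S k)ᵀ * S k) * fmat)) := by
    rw [Matrix.mul_smul, Matrix.mul_assoc]
  rw [h2, StS]
  have h3 : (1 : Matrix (Fin 4) (Fin 4) ℝ)
        - (x+2)⁻¹ • (!![1,0,0,0; 0,1,0,0; 0,0,2,0; 0,0,0,(k:ℝ)] * fmat)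
      = (x+2)⁻¹ • ((x+2) • (1 : Matrix (Fin 4) (Fin 4) ℝ)
        - !![1,0,0,0; 0,1,0,0; 0,0,2,0; 0,0,0,(k:ℝ)] * fmat) := by
    rw [smul_sub, smul_smul, inv_mul_cancel₀ hy, one_smul]
  rw [h3, Matrix.det_smul]
  have h4 : (x+2) • (1 : Matrix (Fin 4) (Fin 4) ℝ)
        - !![1,0,0,0; 0,1,0,0; 0,0,2,0; 0,0,0,(k:ℝ)] * fmat
      = !![x, -1, -1, -1; -1, x, -1, -2; -2, -2, x-2, -4;
           -(k:ℝ), -2*k, -2*k, x+2-2*k] := by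
    ext i j
    fin_cases i <;> fin_cases j <;>
      simp [fmat, Matrix.mul_apply, Fin.sum_univ_four, Matrix.one_apply] <;> ring
  rw [h4]
  have h5 : (!![x, -1, -1, -1; -1, x, -1, -2; -2, -2, x-2, -4;
           -(k:ℝ), -2*k, -2*k, x+2-2*k]).det
      = x^4 - 2*k*x^3 - (9*k+9)*x^2 - (8*k+12)*x - (2*k+4) := by
    rw [Matrix.det_succ_row_zero]
    simp [Fin.sum_univ_succ, Matrix.det_fin_three, Fin.succAbove]
    ring
  rw [h5]
  have hcard : Fintype.card (Fin (k+4)) = k + 4 := by simp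
  have hcard4 : Fintype.card (Fin 4) = 4 := by simp
  rw [hcard, hcard4]
  field_simp
  ring
end BT

namespace BT
open Polynomial

noncomputable def Qpoly (k : ℕ) : ℝ[X] :=
  X^4 - C (2*(k:ℝ)) * X^3 - C (9*(k:ℝ)+9) * X^2 - C (8*(k:ℝ)+12) * X - C (2*(k:ℝ)+4)

lemma Qpoly_eval (k : ℕ) (x : ℝ) :
    (Qpoly k).eval x = x^4 - 2*k*x^3 - (9*k+9)*x^2 - (8*k+12)*x - (2*k+4) := by
  simp [Qpoly]

lemma Qpoly_monic (k : ℕ) : (Qpoly k).Monic := by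
  unfold Qpoly; monicity!

lemma Qpoly_natDegree (k : ℕ) : (Qpoly k).natDegree = 4 := by
  unfold Qpoly; compute_degree!

lemma poly_id (k : ℕ) :
    ∏ i : Fin (k+4), (X - C ((herm k).eigenvalues i))
      = (X - C (-2:ℝ))^k * Qpoly k := by
  apply Polynomial.eq_of_infinite_eval_eq
  have hinf : ({(-2:ℝ)}ᶜ : Set ℝ).Infinite :=
    Set.Finite.infinite_compl (Set.finite_singleton _)
  apply hinf.mono
  intro x hx
  have hx' : x ≠ -2 := hx
  show Polynomial.eval x _ = Polynomial.eval x _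
  rw [Polynomial.eval_prod]
  simp only [Polynomial.eval_sub, Polynomial.eval_X, Polynomial.eval_C,
    Polynomial.eval_mul, Polynomial.eval_pow]
  rw [eig_prod, det_eval k x hx', Qpoly_eval]
  ring_nf

lemma roots_eq (k : ℕ) :
    Finset.univ.val.map (herm k).eigenvalues
      = Multiset.replicate k (-2) + (Qpoly k).roots := by
  have h1 : ((Finset.univ.val.map (herm k).eigenvalues).map
      (fun a => X - C a)).prod = (X - C (-2:ℝ))^k * Qpoly k := by
    rw [Multiset.map_map]
    exact poly_id k
  have := congrArg Polynomial.roots h1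
  rw [Polynomial.roots_multiset_prod_X_sub_C] at this
  rw [this, Polynomial.roots_mul, Polynomial.roots_pow, Polynomial.roots_X_sub_C,
    Multiset.nsmul_singleton]
  exact mul_ne_zero (pow_ne_zero _ (X_sub_C_ne_zero _)) (Qpoly_monic k).ne_zero

lemma roots_card (k : ℕ) : Multiset.card (Qpoly k).roots = 4 := by
  have := congrArg Multiset.card (roots_eq k)
  rw [Multiset.card_map, Multiset.card_add, Multiset.card_replicate] at this
  simp at this
  omega

lemma Qpoly_eval_roots (k : ℕ) (t : ℝ) :
    (Qpoly k).eval t = (((Qpoly k).roots).map (fun r => t - r)).prod := by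
  conv_lhs => rw [← prod_multiset_X_sub_C_of_monic_of_roots_card_eq (Qpoly_monic k)
    (by rw [roots_card, Qpoly_natDegree])]
  rw [Polynomial.eval_multiset_prod, Multiset.map_map]
  simp

end BT

namespace BT

lemma prod_sign (t : ℝ) (R : Multiset ℝ) (h : ∀ r ∈ R, r ≠ t) :
    (R.map (fun r => t - r)).prod ≠ 0 ∧
    (0 < (R.map (fun r => t - r)).prod ↔ Even (R.countP (fun r => t < r))) := by
  induction R using Multiset.induction_on with
  | empty => simp
  | cons a s ih =>
    have ha : a ≠ t := h a (Multiset.mem_cons_self a s)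
    obtain ⟨h1, h2⟩ := ih (fun r hr => h r (Multiset.mem_cons_of_mem hr))
    rw [Multiset.map_cons, Multiset.prod_cons, Multiset.countP_cons]
    constructor
    · exact mul_ne_zero (sub_ne_zero.mpr (Ne.symm ha)) h1
    · rcases lt_or_gt_of_ne ha with hlt | hgt
      · have hpos : 0 < t - a := sub_pos.mpr hlt
        rw [if_neg (not_lt.mpr hlt.le), add_zero, ← h2, mul_pos_iff]
        constructor
        · rintro (⟨_, hP⟩ | ⟨hneg, _⟩)
          · exact hP
          · linarith
        · intro hP; exact Or.inl ⟨hpos, hP⟩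
      · have hneg : t - a < 0 := by linarith
        rw [if_pos hgt, Nat.even_add_one, ← h2, mul_pos_iff]
        constructor
        · rintro (⟨hpos, _⟩ | ⟨_, hP⟩)
          · linarith
          · intro h0; linarith
        · intro hh
          exact Or.inr ⟨hneg, lt_of_le_of_ne (not_lt.mp hh) h1⟩

lemma roots_ne (k : ℕ) (t : ℝ) (ht : (Qpoly k).eval t ≠ 0) :
    ∀ r ∈ (Qpoly k).roots, r ≠ t := by
  intro r hr he
  subst he
  exact ht (Polynomial.isRoot_of_mem_roots hr)

lemma countP_mono (R : Multiset ℝ) (p q : ℝ → Prop) [DecidablePred p] [DecidablePred q]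
    (h : ∀ r, p r → q r) : R.countP p ≤ R.countP q := by
  rw [Multiset.countP_eq_card_filter, Multiset.countP_eq_card_filter]
  exact Multiset.card_le_card (Multiset.monotone_filter_right R h)

-- the three key sign facts
lemma qval_half (k : ℕ) : (Qpoly k).eval (-1/2) = -3/16 := by
  rw [Qpoly_eval]; ring

lemma qval_two (k : ℕ) : (Qpoly k).eval (-2) = -6*k := by
  rw [Qpoly_eval]; ring

lemma qval_c (k : ℕ) :
    0 < (Qpoly k).eval (-((k:ℝ)+4+1)/(2*((k:ℝ)+4))) := by
  rw [Qpoly_eval]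
  set n : ℝ := (k:ℝ) + 4 with hn
  have hn4 : 4 ≤ n := by simp [hn]
  have hn0 : n ≠ 0 := by intro h; rw [h] at hn4; norm_num at hn4
  have hk : (k:ℝ) = n - 4 := by rw [hn]; ring
  set c : ℝ := -(n+1)/(2*n) with hc
  have key : (16 * n^4) * (c^4 - 2*(k:ℝ)*c^3 - (9*(k:ℝ)+9)*c^2 - (8*(k:ℝ)+12)*c - (2*(k:ℝ)+4))
      = n^4 - 12*n^3 + 70*n^2 - 12*n + 1 := by
    rw [hk, hc]
    field_simp
    ring
  have hpos : 0 < n^4 - 12*n^3 + 70*n^2 - 12*n + 1 := by nlinarith [sq_nonneg (n - 6), sq_nonneg n, sq_nonneg (n-1)]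
  nlinarith [pow_pos (lt_of_lt_of_le (by norm_num) hn4) 4]

lemma count_d (k : ℕ) :
    (Qpoly k).roots.countP (fun r => -1/2 < r) = 1 := by
  set R := (Qpoly k).roots with hR
  have hhalf : (Qpoly k).eval (-1/2) ≠ 0 := by rw [qval_half]; norm_num
  have hne : ∀ r ∈ R, r ≠ -1/2 := roots_ne k _ hhalf
  obtain ⟨hne0, hiff⟩ := prod_sign (-1/2) R hne
  have hprodneg : (R.map (fun r => (-1/2) - r)).prod < 0 := by
    have := Qpoly_eval_roots k (-1/2)
    rw [qval_half] at this
    rw [← this]; norm_num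
  have hodd : ¬ Even (R.countP (fun r => -1/2 < r)) := by
    intro he
    have := hiff.mpr he
    linarith
  -- also countP ≤ ... we must rule out 3
  by_contra hne1
  have hcard : Multiset.card R = 4 := roots_card k
  have hle : R.countP (fun r => -1/2 < r) ≤ 4 := by
    rw [← hcard]; exact Multiset.countP_le_card _ _
  have hd3 : R.countP (fun r => -1/2 < r) = 3 := by
    rcases Nat.even_or_odd (R.countP (fun r => -1/2 < r)) with he | ho
    · exact absurd he hodd
    · rcases ho with ⟨m, hm⟩
      omega
  -- now countP (c < ·) is even, ≥ 3, ≤ 4 so = 4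
  set c : ℝ := -((k:ℝ)+4+1)/(2*((k:ℝ)+4)) with hc
  have hcval : (Qpoly k).eval c ≠ 0 := ne_of_gt (qval_c k)
  have hnec : ∀ r ∈ R, r ≠ c := roots_ne k _ hcval
  obtain ⟨hne0c, hiffc⟩ := prod_sign c R hnec
  have hprodpos : 0 < (R.map (fun r => c - r)).prod := by
    have := Qpoly_eval_roots k c
    rw [← this]; exact qval_c k
  have hevenc : Even (R.countP (fun r => c < r)) := hiffc.mp hprodpos
  have hclt : c < -1/2 := by
    rw [hc, div_lt_iff₀ (by positivity)]
    nlinarith [Nat.cast_nonneg (α := ℝ) k]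
  have hmono : R.countP (fun r => -1/2 < r) ≤ R.countP (fun r => c < r) :=
    countP_mono R _ _ (fun r hr => lt_trans hclt hr)
  have hlec : R.countP (fun r => c < r) ≤ 4 := by
    rw [← hcard]; exact Multiset.countP_le_card _ _
  have hc4 : R.countP (fun r => c < r) = 4 := by
    rcases hevenc with ⟨m, hm⟩
    omega
  -- all roots > c
  have hall : ∀ r ∈ R, c < r := Multiset.countP_eq_card.mp (by rw [hc4, hcard])
  -- contradiction with q(-2) = -6k ≤ 0
  have h2c : (-2:ℝ) < c := by
    rw [hc, lt_div_iff₀ (by positivity)]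
    nlinarith [Nat.cast_nonneg (α := ℝ) k]
  have hne2 : ∀ r ∈ R, r ≠ -2 := by
    intro r hr he
    have := hall r hr
    rw [he] at this
    linarith
  obtain ⟨hne02, hiff2⟩ := prod_sign (-2) R hne2
  have heval2 : (R.map (fun r => (-2:ℝ) - r)).prod = -6*k := by
    rw [← Qpoly_eval_roots, qval_two]
  have heven2 : Even (R.countP (fun r => (-2:ℝ) < r)) := by
    have : R.countP (fun r => (-2:ℝ) < r) = 4 := by
      have hge : R.countP (fun r => c < r) ≤ R.countP (fun r => (-2:ℝ) < r) := by
        apply countP_mono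
        intro r hr
        linarith
      have hle2 : R.countP (fun r => (-2:ℝ) < r) ≤ 4 := by
        rw [← hcard]; exact Multiset.countP_le_card _ _
      omega
    rw [this]; exact ⟨2, rfl⟩
  have hpos2 : 0 < (R.map (fun r => (-2:ℝ) - r)).prod := hiff2.mpr heven2
  rw [heval2] at hpos2
  have : (0:ℝ) ≤ 6*k := by positivity
  linarith

lemma count_b (k : ℕ) :
    2 ≤ (Qpoly k).roots.countP
      (fun r => (-((k:ℝ)+4+1)/(2*((k:ℝ)+4))) < r) := by
  set R := (Qpoly k).roots with hR
  set c : ℝ := -((k:ℝ)+4+1)/(2*((k:ℝ)+4)) with hc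
  have hcval : (Qpoly k).eval c ≠ 0 := ne_of_gt (qval_c k)
  have hnec : ∀ r ∈ R, r ≠ c := roots_ne k _ hcval
  obtain ⟨hne0c, hiffc⟩ := prod_sign c R hnec
  have hprodpos : 0 < (R.map (fun r => c - r)).prod := by
    rw [← Qpoly_eval_roots]; exact qval_c k
  have hevenc : Even (R.countP (fun r => c < r)) := hiffc.mp hprodpos
  have hclt : c < -1/2 := by
    rw [hc, div_lt_iff₀ (by positivity)]
    nlinarith [Nat.cast_nonneg (α := ℝ) k]
  have hd := count_d k
  rw [← hR] at hd
  have hmono : R.countP (fun r => -1/2 < r) ≤ R.countP (fun r => c < r) :=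
    countP_mono R _ _ (fun r hr => lt_trans hclt hr)
  rcases hevenc with ⟨m, hm⟩
  omega

end BT

namespace BT

-- if at most 1 element is ≥ t, then the second-from-top is < t
lemma sorted_snd_lt (L : List ℝ) (m : ℕ) (hs : L.Pairwise (· ≤ ·))
    (hlen : L.length = m + 2) (t : ℝ)
    (h : L.countP (fun e => decide (t ≤ e)) ≤ 1) : L.getD m 0 < t := by
  by_contra hcon
  push_neg at hcon
  have hm : m < L.length := by omega
  have hm1 : m + 1 < L.length := by omega
  rw [List.getD_eq_getElem L 0 hm] at hcon
  have hle : L[m] ≤ L[m+1] :=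
    hs.rel_get_of_lt (a := ⟨m, hm⟩) (b := ⟨m+1, hm1⟩) (by simp)
  have h2 : t ≤ L[m+1] := le_trans hcon hle
  -- countP ≥ 2 via drop
  have hsplit : L.countP (fun e => decide (t ≤ e))
      = (L.take m).countP (fun e => decide (t ≤ e))
        + (L.drop m).countP (fun e => decide (t ≤ e)) := by
    rw [← List.countP_append, List.take_append_drop]
  have hdlen : (L.drop m).length = 2 := by rw [List.length_drop]; omega
  obtain ⟨a, b, hab⟩ := List.length_eq_two.mp hdlen
  have ha : a = L[m] := by
    have h0 : (L.drop m)[0]'(by rw [hdlen]; omega) = L[m] := by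
      simp
    simp only [hab, List.getElem_cons_zero] at h0
    exact h0
  have hb : b = L[m+1] := by
    have h0 : (L.drop m)[1]'(by rw [hdlen]; omega) = L[m+1] := by
      simp
    simp only [hab, List.getElem_cons_succ, List.getElem_cons_zero] at h0
    exact h0
  have : (L.drop m).countP (fun e => decide (t ≤ e)) = 2 := by
    rw [hab]
    have hta : decide (t ≤ a) = true := by rw [ha]; simpa using hcon
    have htb : decide (t ≤ b) = true := by rw [hb]; simpa using h2
    simp [List.countP_cons, hta, htb]
  omega

-- if at least 2 elements are > t, then the second-from-top is > t
lemma lt_sorted_snd (L : List ℝ) (m : ℕ) (hs : L.Pairwise (· ≤ ·))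
    (hlen : L.length = m + 2) (t : ℝ)
    (h : 2 ≤ L.countP (fun e => decide (t < e))) : t < L.getD m 0 := by
  by_contra hcon
  push_neg at hcon
  have hm : m < L.length := by omega
  rw [List.getD_eq_getElem L 0 hm] at hcon
  have hsplit : L.countP (fun e => decide (t < e))
      = (L.take (m+1)).countP (fun e => decide (t < e))
        + (L.drop (m+1)).countP (fun e => decide (t < e)) := by
    rw [← List.countP_append, List.take_append_drop]
  have htake : (L.take (m+1)).countP (fun e => decide (t < e)) = 0 := by
    rw [List.countP_eq_zero]
    intro e he
    rw [List.mem_take_iff_getElem] at he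
    obtain ⟨i, hi, hie⟩ := he
    have hi' : i < L.length := by
      simp at hi; omega
    have hile : i ≤ m := by simp at hi; omega
    have hLim : L[i] ≤ L[m] :=
      hs.rel_get_of_le (a := ⟨i, hi'⟩) (b := ⟨m, hm⟩) (by simp [Fin.mk_le_mk]; omega)
    rw [← hie]
    simp only [decide_eq_true_eq]
    intro hti
    have : t < L[m] := lt_of_lt_of_le hti hLim
    linarith
  have hdrop : (L.drop (m+1)).countP (fun e => decide (t < e)) ≤ 1 := by
    have : (L.drop (m+1)).countP (fun e => decide (t < e)) ≤ (L.drop (m+1)).length :=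
      List.countP_le_length
    rw [List.length_drop] at this
    omega
  omega

end BT

namespace BT

lemma main_bounds (k : ℕ) :
    lambda2 (distMatrix (Btheta k)) < -1/2 ∧
    -((k : ℝ) + 4 + 1) / (2 * ((k : ℝ) + 4)) < lambda2 (distMatrix (Btheta k)) := by
  have hherm := herm k
  rw [lambda2, kthLargestEig, dif_pos hherm]
  set E : Multiset ℝ := Finset.univ.val.map hherm.eigenvalues with hE
  set L : List ℝ := E.sort (· ≤ ·) with hL
  set c : ℝ := -((k : ℝ) + 4 + 1) / (2 * ((k : ℝ) + 4)) with hc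
  have hidx : Fintype.card (Fin (k+4)) - 2 = k + 2 := by simp
  rw [hidx]
  have hsorted : L.Pairwise (· ≤ ·) := Multiset.pairwise_sort _ _
  have hcardE : Multiset.card E = k + 4 := by
    rw [hE, Multiset.card_map]
    simp
  have hlen : L.length = (k + 2) + 2 := by
    rw [hL, Multiset.length_sort, hcardE]
  have hroots : E = Multiset.replicate k (-2) + (Qpoly k).roots := roots_eq k
  have hclt : c < -1/2 := by
    rw [hc, div_lt_iff₀ (by positivity)]
    nlinarith [Nat.cast_nonneg (α := ℝ) k]
  have h2c : (-2:ℝ) < c := by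
    rw [hc, lt_div_iff₀ (by positivity)]
    nlinarith [Nat.cast_nonneg (α := ℝ) k]
  -- transfer countP from list to multiset
  have htrans : ∀ (p : ℝ → Prop) [DecidablePred p],
      L.countP (fun a => decide (p a)) = E.countP p := by
    intro p hp
    rw [← Multiset.coe_countP, hL, Multiset.sort_eq]
  constructor
  · -- upper bound
    apply sorted_snd_lt L (k+2) hsorted hlen
    rw [htrans (fun e => -1/2 ≤ e)]
    rw [hroots, Multiset.countP_add]
    have hrep : (Multiset.replicate k (-2:ℝ)).countP (fun e => -1/2 ≤ e) = 0 := by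
      rw [Multiset.countP_eq_zero]
      intro a ha
      rw [Multiset.eq_of_mem_replicate ha]
      norm_num
    have hhalf : (Qpoly k).eval (-1/2) ≠ 0 := by rw [qval_half]; norm_num
    have hne : ∀ r ∈ (Qpoly k).roots, r ≠ -1/2 := roots_ne k _ hhalf
    have hcnt : (Qpoly k).roots.countP (fun e => -1/2 ≤ e)
        = (Qpoly k).roots.countP (fun e => -1/2 < e) := by
      apply Multiset.countP_congr rfl
      intro r hr
      have := hne r hr
      simp only [eq_iff_iff]
      constructor
      · intro hle; exact lt_of_le_of_ne hle (Ne.symm this)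
      · exact le_of_lt
    rw [hrep, hcnt, count_d]
  · -- lower bound
    apply lt_sorted_snd L (k+2) hsorted hlen
    rw [htrans (fun e => c < e)]
    rw [hroots, Multiset.countP_add]
    have hrep : (Multiset.replicate k (-2:ℝ)).countP (fun e => c < e) = 0 := by
      rw [Multiset.countP_eq_zero]
      intro a ha
      rw [Multiset.eq_of_mem_replicate ha]
      exact not_lt.mpr (le_of_lt h2c)
    rw [hrep, zero_add]
    exact count_b k

end BT

theorem lambda2_Btheta (k : ℕ) :
    lambda2 (distMatrix (Btheta k)) < -1/2 ∧
    -((k : ℝ) + 4 + 1) / (2 * ((k : ℝ) + 4)) < lambda2 (distMatrix (Btheta k)) ∧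
    Filter.Tendsto (fun k : ℕ => lambda2 (distMatrix (Btheta k)))
      Filter.atTop (nhds (-1/2)) := by
  refine ⟨(BT.main_bounds k).1, (BT.main_bounds k).2, ?_⟩
  have hlow : Filter.Tendsto (fun k : ℕ => -((k : ℝ) + 4 + 1) / (2 * ((k : ℝ) + 4)))
      Filter.atTop (nhds (-1/2)) := by
    have heq : ∀ k : ℕ, -((k : ℝ) + 4 + 1) / (2 * ((k : ℝ) + 4))
        = -1/2 - (2 * ((k : ℝ) + 4))⁻¹ := by
      intro k
      have : (2 * ((k : ℝ) + 4)) ≠ 0 := by positivity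
      field_simp
      ring
    simp only [heq]
    have hat : Filter.Tendsto (fun k : ℕ => 2 * ((k : ℝ) + 4)) Filter.atTop Filter.atTop := by
      apply Filter.tendsto_atTop_mono (f := fun k : ℕ => (k : ℝ))
      · intro k
        nlinarith [Nat.cast_nonneg (α := ℝ) k]
      · exact tendsto_natCast_atTop_atTop
    have h0 := hat.inv_tendsto_atTop
    have := (tendsto_const_nhds (x := (-1/2 : ℝ)) (f := Filter.atTop (α := ℕ))).sub h0
    simpa using this
  exact tendsto_of_tendsto_of_tendsto_of_le_of_le hlow tendsto_const_nhds
    (fun k => le_of_lt (BT.main_bounds k).2)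
    (fun k => le_of_lt (BT.main_bounds k).1)
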